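/- With the longest-chain setup, the set of ideals of P is the disjoint union 𝓘_0(P) ∪ 𝓘_1(P) ∪ ⋯ ∪ 𝓘_k(P), where 𝓘_i(P) = {I ideal of P : ζ(I) = i} and ζ(I) is the largest index i with c_i ∈ I (0 if I contains no element of C). Consequently, the number of ideals of P equals the sum over i = 0,…,k of the number of ideals of P_i. -/

import Mathlib

open Finset

variable {α : Type*}

/-- `u ≼ cᵢ` with the virtual conventions: the virtual element `c_{k+1}` lies above
everything (and `c₀` below everything, so `u ≼ c₀` never holds). -/
def leC [PartialOrder α] (k : ℕ) (c : ℕ → α) (u : α) (i : ℕ) : Prop :=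
  i = k + 1 ∨ (1 ≤ i ∧ i ≤ k ∧ u ≤ c i)

/-- `cᵢ ≼ u` with the virtual conventions: `c₀` lies below everything. -/
def cLe [PartialOrder α] (k : ℕ) (c : ℕ → α) (u : α) (i : ℕ) : Prop :=
  i = 0 ∨ (1 ≤ i ∧ i ≤ k ∧ c i ≤ u)

/-- `s_u = max { i : cᵢ ≼ u }`. -/
noncomputable def sIdx [PartialOrder α] (k : ℕ) (c : ℕ → α) (u : α) : ℕ :=
  sSup {i | cLe k c u i}

/-- `l_u = min { i : u ≼ cᵢ }`. -/
noncomputable def lIdx [PartialOrder α] (k : ℕ) (c : ℕ → α) (u : α) : ℕ :=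
  sInf {i | leC k c u i}

/-- `u ∈ Pᵢ`, i.e. `u ⋠ cᵢ` and `u ⋡ c_{i+1}`. -/
def memP [PartialOrder α] (k : ℕ) (c : ℕ → α) (i : ℕ) (u : α) : Prop :=
  ¬ leC k c u i ∧ ¬ cLe k c u (i + 1)

/-- `u` is incomparable with `cᵢ` (virtual elements are comparable to everything). -/
def incompC [PartialOrder α] (k : ℕ) (c : ℕ → α) (u : α) (i : ℕ) : Prop :=
  ¬ leC k c u i ∧ ¬ cLe k c u i

/-- The underlying set `C = {c₁, …, c_k}` of the chain. -/
def chainSet (k : ℕ) (c : ℕ → α) : Set α := c '' (Set.Icc 1 k)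

/-- `c₁ ≺ c₂ ≺ ⋯ ≺ c_k` is a chain of maximum cardinality in the finite poset `α`. -/
def IsLongestChain [PartialOrder α] [Fintype α] (k : ℕ) (c : ℕ → α) : Prop :=
  (∀ i j, 1 ≤ i → i < j → j ≤ k → c i < c j) ∧
  ∀ D : Finset α, IsChain (· ≤ ·) (D : Set α) → D.card ≤ k

/-- `I` is an ideal (downward-closed subset) of the poset `α`. -/
def IsIdealSet [PartialOrder α] (I : Set α) : Prop :=
  ∀ u ∈ I, ∀ v, v ≤ u → v ∈ I

/-- `ζ(I) = i`: `cᵢ` is the largest element of `C` in `I` (and `ζ(I) = 0` if `I ∩ C = ∅`). -/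
def zetaEq [PartialOrder α] (k : ℕ) (c : ℕ → α) (I : Set α) (i : ℕ) : Prop :=
  (i = 0 ∧ ∀ j, 1 ≤ j → j ≤ k → c j ∉ I) ∨
  (1 ≤ i ∧ i ≤ k ∧ c i ∈ I ∧ ∀ j, i < j → j ≤ k → c j ∉ I)

/-- `Dᵢ`, the downset of `cᵢ` (with `D₀ = ∅`). -/
def Dset [PartialOrder α] (k : ℕ) (c : ℕ → α) (i : ℕ) : Set α :=
  {u | 1 ≤ i ∧ i ≤ k ∧ u ≤ c i}

/-- The subposet `Pᵢ` as a subset of `α`. -/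
def Pset [PartialOrder α] (k : ℕ) (c : ℕ → α) (i : ℕ) : Set α :=
  {u | memP k c i u}

/-- `I` is an ideal of the induced subposet on `S`: `I ⊆ S` and `I` is
downward-closed within `S`. -/
def IsIdealOf [PartialOrder α] (S I : Set α) : Prop :=
  I ⊆ S ∧ ∀ u ∈ I, ∀ v ∈ S, v ≤ u → v ∈ I

section Aux

variable [PartialOrder α] {k : ℕ} {c : ℕ → α}

lemma notMem_Dset_of_memP {i : ℕ} {u : α} (h : memP k c i u) : u ∉ Dset k c i := by
  intro hu
  exact h.1 (Or.inr ⟨hu.1, hu.2.1, hu.2.2⟩)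

lemma forward_ideal {I : Set α} (hI : IsIdealSet I) {i : ℕ} (hik : i ≤ k)
    (hz : zetaEq k c I i) : IsIdealOf (Pset k c i) (I \ Dset k c i) := by
  constructor
  · rintro u ⟨huI, huD⟩
    refine ⟨?_, ?_⟩
    · rintro (h | ⟨h1, h2, h3⟩)
      · omega
      · exact huD ⟨h1, h2, h3⟩
    · rintro (h | ⟨h1, h2, h3⟩)
      · omega
      · have hci : c (i + 1) ∈ I := hI u huI _ h3
        rcases hz with ⟨rfl, hall⟩ | ⟨hi1, hik', hci', hmax⟩
        · exact hall _ h1 h2 hci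
        · exact hmax (i + 1) (by omega) h2 hci
  · rintro u ⟨huI, -⟩ v hv hvu
    exact ⟨hI u huI v hvu, notMem_Dset_of_memP hv⟩

lemma Dset_subset {I : Set α} (hI : IsIdealSet I) {i : ℕ} (hz : zetaEq k c I i) :
    Dset k c i ⊆ I := by
  rintro v ⟨h1, h2, h3⟩
  rcases hz with ⟨rfl, -⟩ | ⟨-, -, hci, -⟩
  · omega
  · exact hI _ hci v h3

lemma backward_ideal {J : Set α} {i : ℕ} (hik : i ≤ k)
    (hJ : IsIdealOf (Pset k c i) J) : IsIdealSet (J ∪ Dset k c i) := by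
  rintro u (huJ | huD) v hvu
  · by_cases hv : leC k c v i
    · rcases hv with h | ⟨h1, h2, h3⟩
      · omega
      · exact Or.inr ⟨h1, h2, h3⟩
    · refine Or.inl (hJ.2 u huJ v ⟨hv, ?_⟩ hvu)
      rintro (h | ⟨h1, h2, h3⟩)
      · omega
      · exact (hJ.1 huJ).2 (Or.inr ⟨h1, h2, h3.trans hvu⟩)
  · exact Or.inr ⟨huD.1, huD.2.1, hvu.trans huD.2.2⟩

lemma backward_zeta (hc : ∀ i j, 1 ≤ i → i < j → j ≤ k → c i < c j)
    {J : Set α} {i : ℕ} (hik : i ≤ k) (hJ : IsIdealOf (Pset k c i) J) :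
    zetaEq k c (J ∪ Dset k c i) i := by
  have key : ∀ j, i < j → j ≤ k → c j ∉ J ∪ Dset k c i := by
    rintro j hij hjk (hj | hj)
    · refine (hJ.1 hj).2 (Or.inr ⟨by omega, by omega, ?_⟩)
      rcases eq_or_lt_of_le (Nat.succ_le_of_lt hij) with h | h
      · exact le_of_eq (congrArg c h)
      · exact (hc (i + 1) j (by omega) h hjk).le
    · exact absurd hj.2.2 (not_le_of_gt (hc i j hj.1 hij hjk))
  rcases Nat.eq_zero_or_pos i with rfl | hi
  · exact Or.inl ⟨rfl, fun j h1 h2 => key j h1 h2⟩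
  · exact Or.inr ⟨hi, hik, Or.inr ⟨hi, hik, le_refl _⟩, key⟩

lemma union_diff_eq {J : Set α} {i : ℕ} (hJ : J ⊆ Pset k c i) :
    (J ∪ Dset k c i) \ Dset k c i = J := by
  rw [Set.union_diff_right]
  refine sdiff_eq_left.mpr (Set.disjoint_left.mpr ?_)
  exact fun u h2 h1 => absurd h1 (notMem_Dset_of_memP (hJ h2))

lemma zeta_exu {I : Set α} (hI : IsIdealSet I) : ∃! i, i ≤ k ∧ zetaEq k c I i := by
  classical
  have uniq : ∀ i i', i ≤ k → zetaEq k c I i → i' ≤ k → zetaEq k c I i' → i = i' := by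
    have key : ∀ i i', i < i' → zetaEq k c I i → i' ≤ k → zetaEq k c I i' → False := by
      rintro i i' hlt hz hk' hz'
      rcases hz' with ⟨rfl, -⟩ | ⟨h1', -, hci', -⟩
      · omega
      rcases hz with ⟨rfl, hall⟩ | ⟨h1, h2, hci, hmax⟩
      · exact hall i' h1' hk' hci'
      · exact hmax i' hlt hk' hci'
    intro i i' hik hz hik' hz'
    rcases lt_trichotomy i i' with h | h | h
    · exact absurd (key i i' h hz hik' hz') (fun x => x)
    · exact h
    · exact absurd (key i' i h hz' hik hz) (fun x => x)
  set S : Finset ℕ := (Finset.Icc 1 k).filter (fun j => c j ∈ I) with hS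
  by_cases hSe : S.Nonempty
  · obtain ⟨m, hm⟩ := S.max_of_nonempty hSe
    have hmS : m ∈ S := Finset.mem_of_max hm
    rw [hS, Finset.mem_filter, Finset.mem_Icc] at hmS
    refine ⟨m, ⟨hmS.1.2, Or.inr ⟨hmS.1.1, hmS.1.2, hmS.2, fun j hj hjk hcj => ?_⟩⟩, ?_⟩
    · have : j ∈ S := by
        rw [hS, Finset.mem_filter, Finset.mem_Icc]; exact ⟨⟨by omega, hjk⟩, hcj⟩
      have := Finset.le_max_of_eq this hm
      omega
    · intro i hi
      exact uniq i m hi.1 hi.2 hmS.1.2 (Or.inr ⟨hmS.1.1, hmS.1.2, hmS.2, fun j hj hjk hcj => by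
        have : j ∈ S := by
          rw [hS, Finset.mem_filter, Finset.mem_Icc]; exact ⟨⟨by omega, hjk⟩, hcj⟩
        have := Finset.le_max_of_eq this hm
        omega⟩)
  · have hz0 : zetaEq k c I 0 := by
      refine Or.inl ⟨rfl, fun j h1 h2 hcj => hSe ⟨j, ?_⟩⟩
      rw [hS, Finset.mem_filter, Finset.mem_Icc]; exact ⟨⟨h1, h2⟩, hcj⟩
    exact ⟨0, ⟨Nat.zero_le k, hz0⟩, fun i hi => uniq i 0 hi.1 hi.2 (Nat.zero_le k) hz0⟩

end Aux

lemma nat_card_sigma_fin {n : ℕ} (f : Fin n → Type*) [∀ i, Finite (f i)] :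
    Nat.card (Sigma f) = ∑ i : Fin n, Nat.card (f i) := by
  have : ∀ i, Fintype (f i) := fun i => Fintype.ofFinite (f i)
  simp [Nat.card_eq_fintype_card]

theorem stmt_7 [PartialOrder α] [Fintype α] (k : ℕ) (c : ℕ → α)
    (hC : IsLongestChain k c) :
    (∀ I : Set α, IsIdealSet I → ∃! i, i ≤ k ∧ zetaEq k c I i) ∧
    Nat.card {I : Set α // IsIdealSet I} =
      ∑ i ∈ Finset.range (k + 1), Nat.card {J : Set α // IsIdealOf (Pset k c i) J} := by
  classical
  obtain ⟨hc, -⟩ := hC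
  refine ⟨fun I hI => zeta_exu hI, ?_⟩
  have e : {I : Set α // IsIdealSet I} ≃
      Σ i : Fin (k + 1), {J : Set α // IsIdealOf (Pset k c (i : ℕ)) J} := by
    refine
      { toFun := fun I =>
          ⟨⟨(zeta_exu I.2).choose, by
              have := (zeta_exu (k := k) (c := c) I.2).choose_spec.1.1; omega⟩,
            ⟨I.1 \ Dset k c (zeta_exu I.2).choose,
              forward_ideal I.2 (zeta_exu I.2).choose_spec.1.1
                (zeta_exu I.2).choose_spec.1.2⟩⟩
        invFun := fun p =>
          ⟨p.2.1 ∪ Dset k c (p.1 : ℕ),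
            backward_ideal (by omega : (p.1 : ℕ) ≤ k) p.2.2⟩
        left_inv := ?_
        right_inv := ?_ }
    · rintro ⟨I, hI⟩
      apply Subtype.ext
      simp only
      rw [Set.diff_union_self, Set.union_eq_self_of_subset_right
        (Dset_subset hI (zeta_exu hI).choose_spec.1.2)]
    · rintro ⟨⟨i, hilt⟩, J, hJ⟩
      have hik : i ≤ k := by omega
      have hz := backward_zeta hc hik hJ
      have hI : IsIdealSet (J ∪ Dset k c i) := backward_ideal hik hJ
      have heq : (zeta_exu (k := k) (c := c) hI).choose = i :=
        ((zeta_exu (k := k) (c := c) hI).choose_spec.2 i ⟨hik, hz⟩).symm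
      simp only
      -- goal: sigma equality
      refine Sigma.ext (by simpa using heq) ?_
      rw [Subtype.heq_iff_coe_eq]
      · simp only
        rw [heq, union_diff_eq hJ.1]
      · intro x
        rw [Fin.val_mk] at *
        rw [heq]
  rw [Nat.card_congr e, nat_card_sigma_fin]
  exact Fin.sum_univ_eq_sum_range (fun j => Nat.card {J : Set α // IsIdealOf (Pset k c j) J}) (k + 1)
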